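/- Let E be a real inner product space and a, a', b, b' ∈ E. If ‖a − b‖² + ‖a' − b'‖² < ‖a − b'‖² + ‖a' − b‖², then for every t ∈ [0,1], (1−t)•a + t•b ≠ (1−t)•a' + t•b'. -/

import Mathlib

/-- If the pairing `(a,b), (a',b')` strictly realizes the minimum,
`‖a-b‖² + ‖a'-b'‖² < ‖a-b'‖² + ‖a'-b‖²`, then the linear motions along this pairing
do not collide. -/
theorem no_collision_of_strict_min_pairing
    {E : Type*} [NormedAddCommGroup E] [InnerProductSpace ℝ E] (a a' b b' : E)
    (h : ‖a - b‖ ^ 2 + ‖a' - b'‖ ^ 2 < ‖a - b'‖ ^ 2 + ‖a' - b‖ ^ 2) :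
    ∀ t ∈ Set.Icc (0 : ℝ) 1, (1 - t) • a + t • b ≠ (1 - t) • a' + t • b' := by
  rintro t ⟨ht0, ht1⟩ heq
  set u := a - a' with hu
  set v := b - b' with hv
  -- hypothesis gives positive inner product
  have e1 : a - b' = (a - b) + v := by rw [hv]; abel
  have e2 : a' - b = (a' - b') - v := by rw [hv]; abel
  have key : (0:ℝ) < inner ℝ u v := by
    rw [e1, e2, norm_add_sq_real (a - b) v, norm_sub_sq_real (a' - b') v] at h
    have huv : (inner ℝ u v : ℝ) = inner ℝ (a - b) v - inner ℝ (a' - b') v + inner ℝ v v := by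
      have h3 : u = (a - b) - (a' - b') + v := by rw [hu, hv]; abel
      rw [h3, inner_add_left, inner_sub_left]
    rw [real_inner_self_eq_norm_sq] at huv
    nlinarith [huv]
  -- collision gives the combination equals zero
  have hw : (1 - t) • u + t • v = 0 := by
    rw [hu, hv, smul_sub, smul_sub]
    have := sub_eq_zero.mpr heq
    rw [← this]; abel
  rcases eq_or_lt_of_le ht0 with h0t | h0t
  · -- t = 0 : then u = 0
    have hu0 : u = 0 := by
      have := hw
      rw [← h0t] at this
      simpa using this
    rw [hu0, inner_zero_left] at key
    exact lt_irrefl _ key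
  rcases eq_or_lt_of_le ht1 with ht1' | ht1'
  · -- t = 1 : then v = 0
    have hv0 : v = 0 := by
      have := hw
      rw [ht1'] at this
      simpa using this
    rw [hv0, inner_zero_right] at key
    exact lt_irrefl _ key
  -- 0 < t < 1
  have h0 : ‖(1 - t) • u + t • v‖ ^ 2 = 0 := by rw [hw]; simp
  rw [norm_add_sq_real, norm_smul, norm_smul, real_inner_smul_left,
    real_inner_smul_right, Real.norm_eq_abs, Real.norm_eq_abs,
    abs_of_nonneg (by linarith : (0:ℝ) ≤ 1 - t), abs_of_nonneg ht0] at h0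
  nlinarith [mul_pos (mul_pos h0t (sub_pos.mpr ht1')) key,
    sq_nonneg ((1 - t) * ‖u‖), sq_nonneg (t * ‖v‖)]
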